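/- Let A ∈ ℝ^{m×d} and let D ∈ ℝ^{d×n} be a dictionary of full row rank. Then A satisfies the D-null space property of order s if and only if A satisfies the strong D-null space property of order s, i.e., there exists a constant c > 0 such that for every v ∈ ker(A D) and every index set T with |T| ≤ s, there exists u ∈ ker D with ‖v_{T^c}‖₁ − ‖v_T + u‖₁ ≥ c‖D v‖₂. -/

import Mathlib

open scoped BigOperators

section Defs

variable {𝕜 : Type*}

/-- ℓ¹ norm of a finitely-indexed vector. -/
noncomputable def norm1 [RCLike 𝕜] {ι : Type*} [Fintype ι] (x : ι → 𝕜) : ℝ :=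
  ∑ i, ‖x i‖

/-- ℓ² norm of a finitely-indexed vector. -/
noncomputable def norm2 [RCLike 𝕜] {ι : Type*} [Fintype ι] (x : ι → 𝕜) : ℝ :=
  Real.sqrt (∑ i, ‖x i‖ ^ 2)

/-- Restriction of a vector to an index set `T` (zero outside `T`). -/
def restr [Zero 𝕜] {ι : Type*} [DecidableEq ι] (T : Finset ι) (x : ι → 𝕜) : ι → 𝕜 :=
  fun i => if i ∈ T then x i else 0

/-- `x` has at most `s` nonzero entries. -/
def sparse [Zero 𝕜] {ι : Type*} (s : ℕ) (x : ι → 𝕜) : Prop :=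
  {i | x i ≠ 0}.ncard ≤ s

/-- Null space property of order `s`. -/
def NSP [RCLike 𝕜] {m : ℕ} {ι : Type*} [Fintype ι] [DecidableEq ι]
    (M : Matrix (Fin m) ι 𝕜) (s : ℕ) : Prop :=
  ∀ v : ι → 𝕜, M.mulVec v = 0 → v ≠ 0 →
    ∀ T : Finset ι, T.card ≤ s → norm1 (restr T v) < norm1 (restr Tᶜ v)

/-- `D`-null space property of order `s`. -/
def DNSP [RCLike 𝕜] {m d : ℕ} {ι : Type*} [Fintype ι] [DecidableEq ι]
    (A : Matrix (Fin m) (Fin d) 𝕜) (D : Matrix (Fin d) ι 𝕜) (s : ℕ) : Prop :=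
  ∀ T : Finset ι, T.card ≤ s →
    ∀ v : ι → 𝕜, A.mulVec (D.mulVec v) = 0 → D.mulVec v ≠ 0 →
      ∃ u : ι → 𝕜, D.mulVec u = 0 ∧ norm1 (restr T v + u) < norm1 (restr Tᶜ v)

/-- Strong `D`-null space property of order `s` with constant `c`. -/
def SNSPc [RCLike 𝕜] {m d : ℕ} {ι : Type*} [Fintype ι] [DecidableEq ι]
    (A : Matrix (Fin m) (Fin d) 𝕜) (D : Matrix (Fin d) ι 𝕜) (s : ℕ) (c : ℝ) : Prop :=
  ∀ v : ι → 𝕜, A.mulVec (D.mulVec v) = 0 →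
    ∀ T : Finset ι, T.card ≤ s →
      ∃ u : ι → 𝕜, D.mulVec u = 0 ∧
        c * norm2 (D.mulVec v) ≤ norm1 (restr Tᶜ v) - norm1 (restr T v + u)

/-- Smallest positive singular value of a matrix: the infimum of the set of positive `σ`
such that `σ²` is an eigenvalue of `Mᴴ M`. -/
noncomputable def nuSV [RCLike 𝕜] {κ ι : Type*} [Fintype κ] [Fintype ι]
    (M : Matrix κ ι 𝕜) : ℝ :=
  sInf {σ : ℝ | 0 < σ ∧ ∃ v : ι → 𝕜, v ≠ 0 ∧ (M.conjTranspose * M).mulVec v = ((σ : 𝕜) ^ 2) • v}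

/-- ℓ¹ error of the best `s`-term approximation. -/
noncomputable def sigmaS [RCLike 𝕜] {ι : Type*} [Fintype ι] (s : ℕ) (x : ι → 𝕜) : ℝ :=
  sInf {r : ℝ | ∃ v : ι → 𝕜, sparse s v ∧ r = norm1 (x - v)}

/-- Spectral norm (ℓ² → ℓ² operator norm). -/
noncomputable def specNorm [RCLike 𝕜] {m d : ℕ} (A : Matrix (Fin m) (Fin d) 𝕜) : ℝ :=
  sSup {r : ℝ | ∃ x : Fin d → 𝕜, norm2 x ≤ 1 ∧ r = norm2 (A.mulVec x)}

/-- ℓ¹ → ℓ² operator norm: the maximal ℓ² norm of a column. -/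
noncomputable def norm12 [RCLike 𝕜] {d : ℕ} {ι : Type*} [Fintype ι]
    (M : Matrix (Fin d) ι 𝕜) : ℝ :=
  sSup {r : ℝ | ∃ j : ι, r = norm2 (fun i => M i j)}

end Defs

section Aux
variable {n : ℕ}

lemma norm1_nonneg (x : Fin n → ℝ) : 0 ≤ norm1 x :=
  Finset.sum_nonneg fun _ _ => norm_nonneg _

lemma norm1_add_le (x y : Fin n → ℝ) : norm1 (x + y) ≤ norm1 x + norm1 y := by
  unfold norm1
  rw [← Finset.sum_add_distrib]
  exact Finset.sum_le_sum fun i _ => norm_add_le _ _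

lemma norm1_smul (c : ℝ) (x : Fin n → ℝ) : norm1 (c • x) = |c| * norm1 x := by
  simp [norm1, Finset.mul_sum, norm_smul]

lemma norm1_neg (x : Fin n → ℝ) : norm1 (-x) = norm1 x := by simp [norm1]

lemma continuous_norm1 : Continuous (norm1 : (Fin n → ℝ) → ℝ) := by
  unfold norm1
  exact continuous_finset_sum _ fun i _ => (continuous_apply i).norm

lemma norm1_sub_norm1_le (x y : Fin n → ℝ) : norm1 x - norm1 y ≤ norm1 (x - y) := by
  have := norm1_add_le (x - y) y
  simp only [sub_add_cancel] at this
  linarith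

lemma norm_le_norm1 (x : Fin n → ℝ) : ‖x‖ ≤ norm1 x := by
  rcases isEmpty_or_nonempty (Fin n) with h | h
  · simp [norm1, Subsingleton.elim x 0]
  refine (pi_norm_le_iff_of_nonneg (norm1_nonneg x)).2 fun i => ?_
  exact Finset.single_le_sum (fun j _ => norm_nonneg (x j)) (Finset.mem_univ i)

lemma norm1_le_card_norm (x : Fin n → ℝ) : norm1 x ≤ n * ‖x‖ := by
  calc norm1 x ≤ ∑ _i : Fin n, ‖x‖ :=
        Finset.sum_le_sum fun i _ => norm_le_pi_norm x i
    _ = n * ‖x‖ := by simp [Finset.sum_const, nsmul_eq_mul]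

lemma restr_apply (T : Finset (Fin n)) (x : Fin n → ℝ) (i : Fin n) :
    restr T x i = if i ∈ T then x i else 0 := rfl

lemma restr_add (T : Finset (Fin n)) (x y : Fin n → ℝ) :
    restr T (x + y) = restr T x + restr T y := by
  funext i; by_cases h : i ∈ T <;> simp [restr, h]

lemma restr_smul (T : Finset (Fin n)) (c : ℝ) (x : Fin n → ℝ) :
    restr T (c • x) = c • restr T x := by
  funext i; by_cases h : i ∈ T <;> simp [restr, h]

lemma restr_sub (T : Finset (Fin n)) (x y : Fin n → ℝ) :
    restr T (x - y) = restr T x - restr T y := by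
  funext i; by_cases h : i ∈ T <;> simp [restr, h]

lemma restr_add_compl (T : Finset (Fin n)) (x : Fin n → ℝ) :
    restr T x + restr Tᶜ x = x := by
  funext i; by_cases h : i ∈ T <;> simp [restr, h]

lemma restr_sub_self (T : Finset (Fin n)) (x : Fin n → ℝ) :
    restr T x - x = -restr Tᶜ x := by
  have := restr_add_compl T x
  funext i
  have := congrFun this i
  simp only [Pi.add_apply] at this
  simp only [Pi.sub_apply, Pi.neg_apply]
  linarith

lemma norm1_restr (T : Finset (Fin n)) (x : Fin n → ℝ) :
    norm1 (restr T x) = ∑ i ∈ T, ‖x i‖ := by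
  rw [norm1]
  rw [← Finset.sum_subset (Finset.subset_univ T)]
  · exact Finset.sum_congr rfl fun i hi => by simp [restr, hi]
  · intro i _ hi; simp [restr, hi]

lemma norm1_restr_le (T : Finset (Fin n)) (x : Fin n → ℝ) :
    norm1 (restr T x) ≤ norm1 x := by
  rw [norm1_restr, norm1]
  exact Finset.sum_le_sum_of_subset_of_nonneg (Finset.subset_univ T)
    (fun i _ _ => norm_nonneg _)

end Aux

section Psi
variable {n : ℕ} (T : Finset (Fin n)) (W : Submodule ℝ (Fin n → ℝ))

noncomputable def psi (v : Fin n → ℝ) : ℝ :=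
  sInf ((fun w => norm1 (restr T v + w)) '' (W : Set (Fin n → ℝ)))

variable {T W}

lemma psiSet_nonempty (v : Fin n → ℝ) :
    ((fun w => norm1 (restr T v + w)) '' (W : Set (Fin n → ℝ))).Nonempty :=
  ⟨norm1 (restr T v + 0), 0, W.zero_mem, rfl⟩

lemma psiSet_bdd (v : Fin n → ℝ) :
    BddBelow ((fun w => norm1 (restr T v + w)) '' (W : Set (Fin n → ℝ))) :=
  ⟨0, by rintro r ⟨w, _, rfl⟩; exact norm1_nonneg _⟩

lemma psi_le {w : Fin n → ℝ} (hw : w ∈ W) (v : Fin n → ℝ) :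
    psi T W v ≤ norm1 (restr T v + w) :=
  csInf_le (psiSet_bdd v) ⟨w, hw, rfl⟩

lemma psi_nonneg (v : Fin n → ℝ) : 0 ≤ psi T W v :=
  le_csInf (psiSet_nonempty v) (by rintro r ⟨w, _, rfl⟩; exact norm1_nonneg _)

lemma le_psi {b : ℝ} (v : Fin n → ℝ) (h : ∀ w ∈ W, b ≤ norm1 (restr T v + w)) :
    b ≤ psi T W v :=
  le_csInf (psiSet_nonempty v) (by rintro r ⟨w, hw, rfl⟩; exact h w hw)

lemma psi_add_le (x y : Fin n → ℝ) : psi T W (x + y) ≤ psi T W x + psi T W y := by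
  have h1 : ∀ w₁ ∈ W, psi T W (x + y) - psi T W y ≤ norm1 (restr T x + w₁) := by
    intro w₁ hw₁
    have h2 : psi T W (x + y) - norm1 (restr T x + w₁) ≤ psi T W y := by
      apply le_psi
      intro w₂ hw₂
      have h3 : psi T W (x + y) ≤ norm1 (restr T (x + y) + (w₁ + w₂)) :=
        psi_le (W.add_mem hw₁ hw₂) _
      have h4 : norm1 (restr T (x + y) + (w₁ + w₂))
          ≤ norm1 (restr T x + w₁) + norm1 (restr T y + w₂) := by
        have : restr T (x + y) + (w₁ + w₂) = (restr T x + w₁) + (restr T y + w₂) := by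
          rw [restr_add]; abel
        rw [this]; exact norm1_add_le _ _
      linarith
    linarith
  have h5 : psi T W (x + y) - psi T W y ≤ psi T W x := le_psi x h1
  linarith

lemma psi_sub_le (x y : Fin n → ℝ) : psi T W x - psi T W y ≤ norm1 (restr T (x - y)) := by
  have h1 : ∀ w ∈ W, psi T W x - norm1 (restr T (x - y)) ≤ norm1 (restr T y + w) := by
    intro w hw
    have h3 : psi T W x ≤ norm1 (restr T x + w) := psi_le hw _
    have h4 : norm1 (restr T x + w) ≤ norm1 (restr T y + w) + norm1 (restr T (x - y)) := by
      have : restr T x + w = (restr T y + w) + restr T (x - y) := by rw [restr_sub]; abel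
      rw [this]; exact norm1_add_le _ _
    linarith
  have := le_psi y h1
  linarith

lemma psi_smul {c : ℝ} (hc : 0 < c) (v : Fin n → ℝ) : psi T W (c • v) = c * psi T W v := by
  have key : ∀ (a : ℝ), 0 < a → ∀ u : Fin n → ℝ, psi T W (a • u) ≤ a * psi T W u := by
    intro a ha u
    have h1 : ∀ w ∈ W, a⁻¹ * psi T W (a • u) ≤ norm1 (restr T u + w) := by
      intro w hw
      have h2 : psi T W (a • u) ≤ norm1 (restr T (a • u) + a • w) := psi_le (W.smul_mem a hw) _
      have h3 : norm1 (restr T (a • u) + a • w) = a * norm1 (restr T u + w) := by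
        rw [restr_smul, ← smul_add, norm1_smul, abs_of_pos ha]
      rw [h3] at h2
      rw [inv_mul_le_iff₀ ha]
      linarith [h2]
    have := le_psi u h1
    calc psi T W (a • u) = a * (a⁻¹ * psi T W (a • u)) := by field_simp
      _ ≤ a * psi T W u := by nlinarith [this]
  have h1 := key c hc v
  have h2 := key c⁻¹ (inv_pos.2 hc) (c • v)
  rw [smul_smul, inv_mul_cancel₀ hc.ne', one_smul] at h2
  have : c * (c⁻¹ * psi T W (c • v)) = psi T W (c • v) := by field_simp
  nlinarith [h2]

lemma psi_attained (v : Fin n → ℝ) :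
    ∃ w ∈ W, psi T W v = norm1 (restr T v + w) ∧
      ∀ w' ∈ W, norm1 (restr T v + w) ≤ norm1 (restr T v + w') := by
  classical
  set f : (Fin n → ℝ) → ℝ := fun w => norm1 (restr T v + w) with hf
  set R : ℝ := 2 * norm1 (restr T v) with hR
  have hRnn : 0 ≤ R := by
    have := norm1_nonneg (restr T v); rw [hR]; linarith
  set K : Set (Fin n → ℝ) := (W : Set (Fin n → ℝ)) ∩ Metric.closedBall 0 R with hK
  have hKc : IsCompact K := by
    apply (isCompact_closedBall (0 : Fin n → ℝ) R).of_isClosed_subset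
    · exact (Submodule.closed_of_finiteDimensional W).inter Metric.isClosed_closedBall
    · exact Set.inter_subset_right
  have h0K : (0 : Fin n → ℝ) ∈ K := by
    constructor
    · exact W.zero_mem
    · simpa using hRnn
  have hfc : Continuous f := by
    apply continuous_norm1.comp
    exact continuous_const.add continuous_id
  obtain ⟨w₀, hw₀K, hw₀min⟩ := hKc.exists_isMinOn ⟨0, h0K⟩ hfc.continuousOn
  have hglobal : ∀ w' ∈ W, f w₀ ≤ f w' := by
    intro w' hw'
    by_cases hle : f w' < f w₀
    · have hf0 : f w₀ ≤ f 0 := hw₀min h0K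
      have hw'K : w' ∈ K := by
        constructor
        · exact hw'
        · rw [Metric.mem_closedBall, dist_zero_right]
          have h1 : norm1 w' ≤ norm1 (restr T v + w') + norm1 (restr T v) := by
            have : w' = (restr T v + w') + (-(restr T v)) := by abel
            calc norm1 w' = norm1 ((restr T v + w') + (-(restr T v))) := by rw [← this]
              _ ≤ norm1 (restr T v + w') + norm1 (-(restr T v)) := norm1_add_le _ _
              _ = norm1 (restr T v + w') + norm1 (restr T v) := by
                  congr 1
                  have : -(restr T v) = (-1 : ℝ) • restr T v := by funext i; simp
                  rw [this, norm1_smul]; simp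
          have h2 : f w' ≤ f 0 := le_of_lt (lt_of_lt_of_le hle hf0)
          have h3 : f 0 = norm1 (restr T v) := by simp [hf]
          have := norm_le_norm1 w'
          rw [h3] at h2
          calc ‖w'‖ ≤ norm1 w' := norm_le_norm1 w'
            _ ≤ R := by rw [hR]; linarith [h1, h2]
      exact absurd (hw₀min hw'K) (not_le.2 hle)
    · exact not_lt.1 hle
  refine ⟨w₀, hw₀K.1, ?_, hglobal⟩
  exact le_antisymm (psi_le hw₀K.1 v) (le_psi v hglobal)

end Psi

section G
variable {n : ℕ}

noncomputable def Gf (T : Finset (Fin n)) (W : Submodule ℝ (Fin n → ℝ)) (v : Fin n → ℝ) : ℝ :=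
  norm1 (restr Tᶜ v) - psi T W v

variable {T : Finset (Fin n)} {W : Submodule ℝ (Fin n → ℝ)}

lemma psi_le_norm1_compl {v : Fin n → ℝ} (hv : v ∈ W) :
    psi T W v ≤ norm1 (restr Tᶜ v) := by
  have h := psi_le (T := T) (W.neg_mem hv) v
  have h2 : restr T v + (-v) = -restr Tᶜ v := by rw [← restr_sub_self T v]; abel
  rwa [h2, norm1_neg] at h

lemma Gf_nonneg_of_mem {v : Fin n → ℝ} (hv : v ∈ W) : 0 ≤ Gf T W v :=
  sub_nonneg.2 (psi_le_norm1_compl hv)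

lemma psi_smul_mem_le {vb : Fin n → ℝ} (hvb : vb ∈ W) (t : ℝ) :
    psi T W (t • vb) ≤ |t| * norm1 (restr Tᶜ vb) := by
  have h := psi_le (T := T) (W.neg_mem (W.smul_mem t hvb)) (t • vb)
  have h2 : restr T (t • vb) + -(t • vb) = t • (-restr Tᶜ vb) := by
    rw [restr_smul, ← smul_neg, ← restr_sub_self T vb, smul_sub]; module
  rwa [h2, norm1_smul, norm1_neg] at h

lemma Gf_smul {c : ℝ} (hc : 0 < c) (v : Fin n → ℝ) : Gf T W (c • v) = c * Gf T W v := by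
  rw [Gf, Gf, restr_smul, norm1_smul, psi_smul hc, abs_of_pos hc]; ring

lemma Gf_sub_le (x y : Fin n → ℝ) : Gf T W x - Gf T W y ≤ 2 * norm1 (x - y) := by
  have h1 : norm1 (restr Tᶜ x) - norm1 (restr Tᶜ y) ≤ norm1 (x - y) := by
    have h2 : norm1 (restr Tᶜ x) ≤ norm1 (restr Tᶜ y) + norm1 (restr Tᶜ (x - y)) := by
      have : restr Tᶜ x = restr Tᶜ y + restr Tᶜ (x - y) := by
        rw [restr_sub]; abel
      rw [this]; exact norm1_add_le _ _
    linarith [norm1_restr_le Tᶜ (x - y)]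
  have h3 : psi T W y - psi T W x ≤ norm1 (x - y) := by
    have := psi_sub_le (T := T) (W := W) y x
    have h4 : norm1 (restr T (y - x)) ≤ norm1 (y - x) := norm1_restr_le _ _
    have h5 : norm1 (y - x) = norm1 (x - y) := by
      rw [show y - x = -(x - y) by abel, norm1_neg]
    linarith
  rw [Gf, Gf]; linarith

lemma Gf_shift {vb : Fin n → ℝ} (hvb : vb ∈ W) (t : ℝ) (v : Fin n → ℝ)
    (h : norm1 (restr Tᶜ (v - t • vb)) ≤ norm1 (restr Tᶜ v) - |t| * norm1 (restr Tᶜ vb)) :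
    Gf T W (v - t • vb) ≤ Gf T W v := by
  have h1 : psi T W v ≤ psi T W (v - t • vb) + psi T W (t • vb) := by
    have := psi_add_le (T := T) (W := W) (v - t • vb) (t • vb)
    rwa [sub_add_cancel] at this
  have h2 := psi_smul_mem_le (T := T) hvb t
  rw [Gf, Gf]; linarith

end G

section Dist
variable {n : ℕ} {W : Submodule ℝ (Fin n → ℝ)}
open Metric

lemma infDist_le_norm (v : Fin n → ℝ) : infDist v (W : Set (Fin n → ℝ)) ≤ ‖v‖ := by
  have := infDist_le_dist_of_mem (x := v) (W.zero_mem : (0 : Fin n → ℝ) ∈ (W : Set (Fin n → ℝ)))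
  simpa using this

lemma mem_of_infDist_zero {v : Fin n → ℝ} (h : infDist v (W : Set (Fin n → ℝ)) = 0) : v ∈ W := by
  have hcl : IsClosed (W : Set (Fin n → ℝ)) := Submodule.closed_of_finiteDimensional W
  exact (hcl.mem_iff_infDist_zero ⟨0, W.zero_mem⟩).2 h

lemma infDist_add_mem {w : Fin n → ℝ} (hw : w ∈ W) (v : Fin n → ℝ) :
    infDist (v + w) (W : Set (Fin n → ℝ)) = infDist v (W : Set (Fin n → ℝ)) := by
  have key : ∀ w₀ ∈ W, ∀ u : Fin n → ℝ,
      infDist (u + w₀) (W : Set (Fin n → ℝ)) ≤ infDist u (W : Set (Fin n → ℝ)) := by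
    intro w₀ hw₀ u
    by_contra hlt
    push_neg at hlt
    obtain ⟨w', hw', hd⟩ := (infDist_lt_iff ⟨0, W.zero_mem⟩).mp hlt
    have h2 : dist (u + w₀) (w' + w₀) = dist u w' := dist_add_right u w' w₀
    have h3 : infDist (u + w₀) (W : Set (Fin n → ℝ)) ≤ dist (u + w₀) (w' + w₀) :=
      infDist_le_dist_of_mem (W.add_mem hw' hw₀)
    rw [h2] at h3
    exact absurd hd (not_lt.2 h3)
  refine le_antisymm (key w hw v) ?_
  have := key (-w) (W.neg_mem hw) (v + w)
  simpa using this

lemma infDist_smul_pos {c : ℝ} (hc : 0 < c) (v : Fin n → ℝ) :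
    infDist (c • v) (W : Set (Fin n → ℝ)) = c * infDist v (W : Set (Fin n → ℝ)) := by
  have key : ∀ (a : ℝ), 0 < a → ∀ u : Fin n → ℝ,
      infDist (a • u) (W : Set (Fin n → ℝ)) ≤ a * infDist u (W : Set (Fin n → ℝ)) := by
    intro a ha u
    by_contra hlt
    push_neg at hlt
    have hlt' : infDist u (W : Set (Fin n → ℝ)) < a⁻¹ * infDist (a • u) (W : Set (Fin n → ℝ)) := by
      rw [lt_inv_mul_iff₀ ha]; linarith
    obtain ⟨w', hw', hd⟩ := (infDist_lt_iff ⟨0, W.zero_mem⟩).mp hlt'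
    have h2 : dist (a • u) (a • w') = a * dist u w' := by
      rw [dist_smul₀, Real.norm_eq_abs, abs_of_pos ha]
    have h3 : infDist (a • u) (W : Set (Fin n → ℝ)) ≤ a * dist u w' := by
      rw [← h2]; exact infDist_le_dist_of_mem (W.smul_mem a hw')
    rw [lt_inv_mul_iff₀ ha] at hd
    linarith
  refine le_antisymm (key c hc v) ?_
  have := key c⁻¹ (inv_pos.2 hc) (c • v)
  rw [smul_smul, inv_mul_cancel₀ hc.ne', one_smul] at this
  rw [← mul_le_mul_iff_right₀ (inv_pos.2 hc)]
  calc c⁻¹ * (c * infDist v (W : Set (Fin n → ℝ))) = infDist v (W : Set (Fin n → ℝ)) := by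
        field_simp
    _ ≤ c⁻¹ * infDist (c • v) (W : Set (Fin n → ℝ)) := this
end Dist

open Metric

set_option maxHeartbeats 1000000 in
lemma key {n : ℕ} (T : Finset (Fin n)) (W : Submodule ℝ (Fin n → ℝ)) :
    ∀ (r : ℕ) (N : Submodule ℝ (Fin n → ℝ)), Module.finrank ℝ N ≤ r →
    (∀ v ∈ N, v ∉ W → 0 < Gf T W v) →
    ∃ c, 0 < c ∧ ∀ v ∈ N, c * infDist v (W : Set (Fin n → ℝ)) ≤ Gf T W v := by
  intro r
  induction r with
  | zero =>
    intro N hrank _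
    refine ⟨1, one_pos, fun v hv => ?_⟩
    have hN : N = ⊥ := Submodule.finrank_eq_zero.1 (Nat.le_zero.1 hrank)
    rw [hN, Submodule.mem_bot] at hv
    subst hv
    rw [infDist_zero_of_mem (Submodule.zero_mem W : (0 : Fin n → ℝ) ∈ (W : Set (Fin n → ℝ)))]
    simpa using Gf_nonneg_of_mem (W.zero_mem)
  | succ r IH =>
    intro N hrank hyp
    by_contra hcon
    push_neg at hcon
    -- a sequence of unit-norm counterexamples
    have hseq : ∀ k : ℕ, ∃ v, v ∈ N ∧ ‖v‖ = 1 ∧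
        Gf T W v < (1 / (k + 1)) * infDist v (W : Set (Fin n → ℝ)) := by
      intro k
      have hkpos : (0 : ℝ) < 1 / (k + 1) := by positivity
      obtain ⟨v, hvN, hlt⟩ := hcon (1 / (k + 1)) hkpos
      have hvW : v ∉ W := by
        intro hm
        rw [infDist_zero_of_mem (hm : v ∈ (W : Set (Fin n → ℝ)))] at hlt
        have := Gf_nonneg_of_mem (T := T) hm
        simp at hlt
        linarith
      have hv0 : v ≠ 0 := fun h => hvW (h ▸ W.zero_mem)
      have hnv : (0 : ℝ) < ‖v‖ := norm_pos_iff.2 hv0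
      refine ⟨‖v‖⁻¹ • v, N.smul_mem _ hvN, ?_, ?_⟩
      · rw [norm_smul, norm_inv, norm_norm, inv_mul_cancel₀ hnv.ne']
      · rw [Gf_smul (inv_pos.2 hnv), infDist_smul_pos (inv_pos.2 hnv)]
        have hinv : (0 : ℝ) < ‖v‖⁻¹ := inv_pos.2 hnv
        calc ‖v‖⁻¹ * Gf T W v < ‖v‖⁻¹ * ((1 / (k + 1)) * infDist v (W : Set (Fin n → ℝ))) :=
              by exact (mul_lt_mul_iff_right₀ hinv).2 hlt
          _ = (1 / (k + 1)) * (‖v‖⁻¹ * infDist v (W : Set (Fin n → ℝ))) := by ring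
    choose vs hvsN hvsnorm hvslt using hseq
    -- extract a convergent subsequence
    have hNclosed : IsClosed (N : Set (Fin n → ℝ)) := Submodule.closed_of_finiteDimensional N
    set s : Set (Fin n → ℝ) := (N : Set (Fin n → ℝ)) ∩ Metric.sphere 0 1 with hs
    have hscompact : IsCompact s := by
      apply (isCompact_sphere (0 : Fin n → ℝ) 1).of_isClosed_subset
      · exact hNclosed.inter Metric.isClosed_sphere
      · exact Set.inter_subset_right
    have hmem : ∀ k, vs k ∈ s := fun k =>
      ⟨hvsN k, by rw [Metric.mem_sphere, dist_zero_right]; exact hvsnorm k⟩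
    obtain ⟨vb, hvbs, φ, hφmono, hφtend⟩ := hscompact.tendsto_subseq hmem
    have hvbN : vb ∈ N := hvbs.1
    have hvbnorm : ‖vb‖ = 1 := by
      have := hvbs.2; rwa [Metric.mem_sphere, dist_zero_right] at this
    have hvb0 : vb ≠ 0 := by
      intro h; rw [h, norm_zero] at hvbnorm; exact zero_ne_one hvbnorm
    -- useful facts about the subsequence
    have hsub : ∀ k : ℕ, Gf T W (vs (φ k)) <
        (1 / (k + 1)) * infDist (vs (φ k)) (W : Set (Fin n → ℝ)) := by
      intro k
      have h1 := hvslt (φ k)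
      have h2 : (1 : ℝ) / (φ k + 1) ≤ 1 / (k + 1) := by
        apply one_div_le_one_div_of_le
        · positivity
        · have h3 : k ≤ φ k := hφmono.le_apply
          have h4 : (k : ℝ) ≤ (φ k : ℝ) := Nat.cast_le.2 h3
          linarith
      calc Gf T W (vs (φ k)) < (1 / (φ k + 1)) * infDist (vs (φ k)) (W : Set (Fin n → ℝ)) := h1
        _ ≤ (1 / (k + 1)) * infDist (vs (φ k)) (W : Set (Fin n → ℝ)) := by
            apply mul_le_mul_of_nonneg_right h2 infDist_nonneg
    have hdistle : ∀ k : ℕ, infDist (vs (φ k)) (W : Set (Fin n → ℝ)) ≤ 1 := by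
      intro k
      have := infDist_le_norm (W := W) (vs (φ k))
      rwa [hvsnorm (φ k)] at this
    by_cases hvbW : vb ∈ W
    · -- limit direction lies in W : use the shift argument and the inductive hypothesis
      classical
      set Sfin : Finset (Fin n) := Finset.univ.filter (fun i => vb i ≠ 0) with hSfin
      have hSne : Sfin.Nonempty := by
        obtain ⟨i, hi⟩ := Function.ne_iff.1 hvb0
        refine ⟨i, ?_⟩
        rw [hSfin, Finset.mem_filter]
        exact ⟨Finset.mem_univ i, by simpa using hi⟩
      -- inductive constants for the smaller spaces
      have hIH : ∀ i : Fin n, vb i ≠ 0 → ∃ c, 0 < c ∧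
          ∀ v ∈ N ⊓ LinearMap.ker (LinearMap.proj i : (Fin n → ℝ) →ₗ[ℝ] ℝ),
            c * infDist v (W : Set (Fin n → ℝ)) ≤ Gf T W v := by
        intro i hi
        set Ni := N ⊓ LinearMap.ker (LinearMap.proj i : (Fin n → ℝ) →ₗ[ℝ] ℝ) with hNi
        have hlt : Ni < N := by
          refine lt_of_le_of_ne inf_le_left (fun h => ?_)
          have hm : vb ∈ Ni := h.symm ▸ hvbN
          have := (Submodule.mem_inf.1 hm).2
          rw [LinearMap.mem_ker] at this
          exact hi this
        have hr : Module.finrank ℝ Ni ≤ r := by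
          have := Submodule.finrank_lt_finrank_of_lt hlt
          omega
        exact IH Ni hr (fun v hv hvW => hyp v (Submodule.mem_inf.1 hv).1 hvW)
      choose! cF hcFpos hcF using hIH
      set c' : ℝ := Sfin.inf' hSne cF with hc'
      have hc'pos : 0 < c' := by
        rw [hc', Finset.lt_inf'_iff]
        intro i hi
        exact hcFpos i (by simpa [hSfin] using hi)
      set δ₀ : ℝ := Sfin.inf' hSne (fun i => |vb i|) with hδ₀
      have hδ₀pos : 0 < δ₀ := by
        rw [hδ₀, Finset.lt_inf'_iff]
        intro i hi
        exact abs_pos.2 (by simpa [hSfin] using hi)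
      -- choose k far enough
      obtain ⟨K₁, hK₁⟩ := (Metric.tendsto_atTop.1 hφtend) δ₀ hδ₀pos
      obtain ⟨k₂, hk₂⟩ := exists_nat_gt (1 / c')
      set k := max K₁ k₂ with hk
      set v := vs (φ k) with hv
      have hvdist : dist v vb < δ₀ := hK₁ k (le_max_left _ _)
      have hvN : v ∈ N := hvsN (φ k)
      have hone : (1 : ℝ) / (k + 1) < c' := by
        rw [div_lt_iff₀ (by positivity)]
        have h1 : (k₂ : ℝ) ≤ k := Nat.cast_le.2 (le_max_right _ _)
        have h2 : (1 : ℝ) / c' < k₂ := hk₂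
        have h3 : 1 / c' * c' = 1 := div_mul_cancel₀ 1 hc'pos.ne'
        nlinarith
      -- signs agree on the support of vb
      have hsign : ∀ i : Fin n, vb i ≠ 0 → 0 < v i * vb i := by
        intro i hi
        have h1 : |v i - vb i| ≤ dist v vb := by
          rw [dist_eq_norm]
          have := norm_le_pi_norm (v - vb) i
          simpa using this
        have h2 : |v i - vb i| < |vb i| := by
          have : δ₀ ≤ |vb i| := Finset.inf'_le _ (by simp [hSfin, hi])
          linarith
        rcases lt_or_gt_of_ne hi with h | h
        · have : v i < 0 := by
            rw [abs_of_neg h] at h2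
            cases abs_lt.1 h2; linarith
          exact mul_pos_of_neg_of_neg this h
        · have : 0 < v i := by
            rw [abs_of_pos h] at h2
            cases abs_lt.1 h2; linarith
          exact mul_pos this h
      -- find i₀ and shifted vector y
      have main : ∃ i₀ : Fin n, vb i₀ ≠ 0 ∧ ∃ y, y ∈ N ∧ y i₀ = 0 ∧
          Gf T W y ≤ Gf T W v ∧
          infDist y (W : Set (Fin n → ℝ)) = infDist v (W : Set (Fin n → ℝ)) := by
        set SS : Finset (Fin n) := Sfin.filter (fun i => i ∉ T) with hSS
        by_cases hSSne : SS.Nonempty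
        · set t : ℝ := SS.inf' hSSne (fun i => v i / vb i) with ht
          have hmemSS : ∀ i ∈ SS, vb i ≠ 0 ∧ i ∉ T := by
            intro i hi
            rw [hSS, Finset.mem_filter] at hi
            refine ⟨?_, hi.2⟩
            have h5 := hi.1
            rw [hSfin, Finset.mem_filter] at h5
            exact h5.2
          have hratio : ∀ i ∈ SS, 0 < v i / vb i := by
            intro i hi
            have h := hsign i (hmemSS i hi).1
            rcases mul_pos_iff.1 h with ⟨h1, h2⟩ | ⟨h1, h2⟩
            · exact div_pos h1 h2
            · exact div_pos_of_neg_of_neg h1 h2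
          have htpos : 0 < t := by
            rw [ht, Finset.lt_inf'_iff]
            exact hratio
          obtain ⟨i₀, hi₀SS, hti₀⟩ := Finset.exists_mem_eq_inf' hSSne (fun i => v i / vb i)
          have hi₀vb : vb i₀ ≠ 0 := (hmemSS i₀ hi₀SS).1
          refine ⟨i₀, hi₀vb, v - t • vb, N.sub_mem hvN (N.smul_mem t hvbN), ?_, ?_, ?_⟩
          · have ht0 : t = v i₀ / vb i₀ := by rw [ht, hti₀]
            simp only [Pi.sub_apply, Pi.smul_apply, smul_eq_mul, ht0]
            field_simp
            ring
          · apply Gf_shift hvbW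
            have hcoord : ∀ i ∈ Tᶜ, ‖(v - t • vb) i‖ = ‖v i‖ - t * ‖vb i‖ := by
              intro i hiT
              rw [Finset.mem_compl] at hiT
              simp only [Pi.sub_apply, Pi.smul_apply, smul_eq_mul, Real.norm_eq_abs]
              by_cases hvbi : vb i = 0
              · simp [hvbi]
              · have hiSS : i ∈ SS := by
                  rw [hSS, Finset.mem_filter, hSfin, Finset.mem_filter]
                  exact ⟨⟨Finset.mem_univ i, hvbi⟩, hiT⟩
                have hle : t ≤ v i / vb i := by
                  rw [ht]; exact Finset.inf'_le _ hiSS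
                have hsgn := hsign i hvbi
                have hcancel : v i / vb i * vb i = v i := div_mul_cancel₀ _ hvbi
                rcases lt_or_gt_of_ne hvbi with h | h
                · have hv_neg : v i < 0 := by nlinarith
                  have hkey : v i ≤ t * vb i := by
                    have := mul_le_mul_of_nonpos_right hle h.le
                    rwa [hcancel] at this
                  rw [abs_of_nonpos (by linarith), abs_of_neg hv_neg, abs_of_neg h]
                  ring
                · have hv_pos : 0 < v i := by nlinarith
                  have hkey : t * vb i ≤ v i := by
                    have := mul_le_mul_of_nonneg_right hle h.le
                    rwa [hcancel] at this
                  rw [abs_of_nonneg (by linarith), abs_of_pos hv_pos, abs_of_pos h]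
            have hsum : norm1 (restr Tᶜ (v - t • vb))
                = norm1 (restr Tᶜ v) - t * norm1 (restr Tᶜ vb) := by
              rw [norm1_restr, norm1_restr, norm1_restr, Finset.mul_sum,
                ← Finset.sum_sub_distrib]
              exact Finset.sum_congr rfl hcoord
            rw [abs_of_pos htpos]
            exact le_of_eq hsum
          · rw [sub_eq_add_neg]
            exact infDist_add_mem (W.neg_mem (W.smul_mem t hvbW)) v
        · obtain ⟨i₀, hi₀⟩ := hSne
          have hi₀vb : vb i₀ ≠ 0 := by
            rw [hSfin, Finset.mem_filter] at hi₀
            exact hi₀.2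
          have hSSempty : SS = ∅ := Finset.not_nonempty_iff_eq_empty.1 hSSne
          have hTc0 : restr Tᶜ vb = 0 := by
            funext i
            by_cases hiT : i ∈ Tᶜ
            · rw [Finset.mem_compl] at hiT
              by_cases hvbi : vb i = 0
              · simp [restr, hvbi]
              · exfalso
                have : i ∈ SS := by
                  rw [hSS, Finset.mem_filter, hSfin, Finset.mem_filter]
                  exact ⟨⟨Finset.mem_univ i, hvbi⟩, hiT⟩
                rw [hSSempty] at this
                exact absurd this (Finset.notMem_empty i)
            · simp [restr, hiT]
          set t : ℝ := v i₀ / vb i₀ with ht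
          refine ⟨i₀, hi₀vb, v - t • vb, N.sub_mem hvN (N.smul_mem t hvbN), ?_, ?_, ?_⟩
          · simp only [Pi.sub_apply, Pi.smul_apply, smul_eq_mul, ht]
            field_simp
            ring
          · apply Gf_shift hvbW
            have h1 : restr Tᶜ (v - t • vb) = restr Tᶜ v := by
              rw [restr_sub, restr_smul, hTc0, smul_zero, sub_zero]
            have h2 : norm1 (restr Tᶜ vb) = 0 := by
              rw [hTc0]
              simp [norm1]
            rw [h1, h2, mul_zero, sub_zero]
          · rw [sub_eq_add_neg]
            exact infDist_add_mem (W.neg_mem (W.smul_mem t hvbW)) v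
      obtain ⟨i₀, hi₀, y, hyN, hyi₀, hGy, hdy⟩ := main
      have hyNi : y ∈ N ⊓ LinearMap.ker (LinearMap.proj i₀ : (Fin n → ℝ) →ₗ[ℝ] ℝ) :=
        ⟨hyN, by simpa [LinearMap.mem_ker] using hyi₀⟩
      have hchain := hcF i₀ hi₀ y hyNi
      have hc'le : c' ≤ cF i₀ := Finset.inf'_le _ (by simp [hSfin, hi₀])
      have hdvpos : 0 < infDist v (W : Set (Fin n → ℝ)) := by
        rcases (infDist_nonneg : 0 ≤ infDist v (W : Set (Fin n → ℝ))).lt_or_eq with h | h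
        · exact h
        · exfalso
          have hvW : v ∈ W := mem_of_infDist_zero h.symm
          have h1 := hsub k
          rw [← h] at h1
          have := Gf_nonneg_of_mem (T := T) hvW
          nlinarith
      have h1 := hsub k
      have h2 : c' * infDist v (W : Set (Fin n → ℝ)) ≤ Gf T W y := by
        rw [← hdy] at *
        calc c' * infDist y (W : Set (Fin n → ℝ))
            ≤ cF i₀ * infDist y (W : Set (Fin n → ℝ)) :=
              mul_le_mul_of_nonneg_right hc'le infDist_nonneg
          _ ≤ Gf T W y := hchain
      have h3 : c' * infDist v (W : Set (Fin n → ℝ)) <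
          c' * infDist v (W : Set (Fin n → ℝ)) := by
        calc c' * infDist v (W : Set (Fin n → ℝ)) ≤ Gf T W y := h2
          _ ≤ Gf T W v := hGy
          _ < (1 / (k + 1)) * infDist v (W : Set (Fin n → ℝ)) := h1
          _ < c' * infDist v (W : Set (Fin n → ℝ)) := by
              exact (mul_lt_mul_iff_left₀ hdvpos).2 hone
      exact absurd h3 (lt_irrefl _)
    · -- limit not in W : contradiction with pointwise positivity
      have hGpos : 0 < Gf T W vb := hyp vb hvbN hvbW
      set ε := Gf T W vb with hε
      obtain ⟨K₁, hK₁⟩ := (Metric.tendsto_atTop.1 hφtend) (ε / (4 * (n + 1))) (by positivity)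
      obtain ⟨k₂, hk₂⟩ := exists_nat_gt (4 / ε)
      set k := max K₁ k₂ with hk
      set v := vs (φ k) with hv
      have hvdist : dist v vb < ε / (4 * (n + 1)) := hK₁ k (le_max_left _ _)
      have h1 : Gf T W vb - Gf T W v ≤ 2 * norm1 (vb - v) := Gf_sub_le vb v
      have h2 : norm1 (vb - v) ≤ n * ‖vb - v‖ := norm1_le_card_norm _
      have h3 : ‖vb - v‖ = dist v vb := by rw [dist_eq_norm, norm_sub_rev]
      have h4 : Gf T W v < 1 / (k + 1) := by
        calc Gf T W v < (1 / (k + 1)) * infDist v (W : Set (Fin n → ℝ)) := hsub k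
          _ ≤ (1 / (k + 1)) * 1 := by
              apply mul_le_mul_of_nonneg_left (hdistle k) (by positivity)
          _ = 1 / (k + 1) := mul_one _
      have h5 : (1 : ℝ) / (k + 1) < ε / 4 := by
        rw [div_lt_div_iff₀ (by positivity) (by norm_num)]
        have h1' : (k₂ : ℝ) ≤ k := Nat.cast_le.2 (le_max_right _ _)
        have h2' : (4 : ℝ) / ε < k₂ := hk₂
        have h3' : 4 / ε * ε = 4 := div_mul_cancel₀ 4 hGpos.ne'
        nlinarith
      have h6 : 2 * norm1 (vb - v) ≤ 2 * (n * (ε / (4 * (n + 1)))) := by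
        have : norm1 (vb - v) ≤ n * (ε / (4 * (n + 1))) := by
          calc norm1 (vb - v) ≤ n * ‖vb - v‖ := h2
            _ = n * dist v vb := by rw [h3]
            _ ≤ n * (ε / (4 * (n + 1))) := by
                apply mul_le_mul_of_nonneg_left hvdist.le (by positivity)
        linarith
      have h7 : 2 * ((n : ℝ) * (ε / (4 * (n + 1)))) ≤ ε / 2 := by
        have hd : (0:ℝ) < 4 * ((n:ℝ) + 1) := by positivity
        have heq : 2 * ((n : ℝ) * (ε / (4 * (n + 1)))) = ε * (2 * n) / (4 * (n + 1)) := by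
          ring
        rw [heq, div_le_div_iff₀ hd (by norm_num : (0:ℝ) < 2)]
        nlinarith [hGpos.le, (Nat.cast_nonneg n : (0:ℝ) ≤ n)]
      linarith [h1, h4, h5, h6, h7]

section Norm2
variable {n : ℕ}

lemma norm2_le_norm1 (x : Fin n → ℝ) : norm2 x ≤ norm1 x := by
  rw [norm2, norm1]
  have h1 : ∑ i, ‖x i‖ ^ 2 ≤ (∑ i, ‖x i‖) ^ 2 := by
    rw [sq (∑ i, ‖x i‖), Finset.sum_mul]
    apply Finset.sum_le_sum
    intro i _
    rw [sq]
    exact mul_le_mul_of_nonneg_left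
      (Finset.single_le_sum (fun j _ => norm_nonneg (x j)) (Finset.mem_univ i)) (norm_nonneg _)
  calc Real.sqrt (∑ i, ‖x i‖ ^ 2) ≤ Real.sqrt ((∑ i, ‖x i‖) ^ 2) := Real.sqrt_le_sqrt h1
    _ = ∑ i, ‖x i‖ := Real.sqrt_sq (Finset.sum_nonneg fun i _ => norm_nonneg _)

lemma norm2_pos {x : Fin n → ℝ} (hx : x ≠ 0) : 0 < norm2 x := by
  rw [norm2, Real.sqrt_pos]
  obtain ⟨i, hi⟩ := Function.ne_iff.1 hx
  have hi' : x i ≠ 0 := by simpa using hi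
  apply Finset.sum_pos' (fun j _ => by positivity) ⟨i, Finset.mem_univ i, ?_⟩
  have : 0 < ‖x i‖ := norm_pos_iff.2 hi'
  positivity

lemma mulVec_norm2_le {d : ℕ} (D : Matrix (Fin d) (Fin n) ℝ) (x : Fin n → ℝ) :
    norm2 (D.mulVec x) ≤ (∑ i, ∑ j, |D i j|) * ‖x‖ := by
  calc norm2 (D.mulVec x) ≤ norm1 (D.mulVec x) := norm2_le_norm1 _
    _ = ∑ i, ‖D.mulVec x i‖ := rfl
    _ ≤ ∑ i, ∑ j, |D i j| * ‖x‖ := by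
        apply Finset.sum_le_sum
        intro i _
        rw [Matrix.mulVec, dotProduct]
        calc ‖∑ j, D i j * x j‖ ≤ ∑ j, ‖D i j * x j‖ := norm_sum_le _ _
          _ ≤ ∑ j, |D i j| * ‖x‖ := by
              apply Finset.sum_le_sum
              intro j _
              rw [norm_mul, Real.norm_eq_abs]
              exact mul_le_mul_of_nonneg_left
                (by simpa using norm_le_pi_norm x j) (abs_nonneg _)
    _ = (∑ i, ∑ j, |D i j|) * ‖x‖ := by rw [Finset.sum_mul]; congr 1; ext i; rw [Finset.sum_mul]

lemma mulVec_le_infDist {d : ℕ} (D : Matrix (Fin d) (Fin n) ℝ) (v : Fin n → ℝ) :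
    norm2 (D.mulVec v) ≤ ((∑ i, ∑ j, |D i j|) + 1) *
      Metric.infDist v ((LinearMap.ker (Matrix.mulVecLin D) : Submodule ℝ (Fin n → ℝ)) :
        Set (Fin n → ℝ)) := by
  set W := (LinearMap.ker (Matrix.mulVecLin D) : Submodule ℝ (Fin n → ℝ)) with hW
  have hcl : IsClosed (W : Set (Fin n → ℝ)) := Submodule.closed_of_finiteDimensional W
  obtain ⟨w, hwW, hwd⟩ := hcl.exists_infDist_eq_dist ⟨0, W.zero_mem⟩ v
  have hw0 : D.mulVec w = 0 := by
    have := (LinearMap.mem_ker.1 hwW)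
    rwa [Matrix.mulVecLin_apply] at this
  have heq : D.mulVec v = D.mulVec (v - w) := by
    rw [Matrix.mulVec_sub, hw0, sub_zero]
  have hS : (0:ℝ) ≤ ∑ i, ∑ j, |D i j| :=
    Finset.sum_nonneg fun i _ => Finset.sum_nonneg fun j _ => abs_nonneg _
  calc norm2 (D.mulVec v) = norm2 (D.mulVec (v - w)) := by rw [heq]
    _ ≤ (∑ i, ∑ j, |D i j|) * ‖v - w‖ := mulVec_norm2_le D (v - w)
    _ ≤ ((∑ i, ∑ j, |D i j|) + 1) * ‖v - w‖ := by
        apply mul_le_mul_of_nonneg_right (by linarith) (norm_nonneg _)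
    _ = ((∑ i, ∑ j, |D i j|) + 1) * Metric.infDist v (W : Set (Fin n → ℝ)) := by
        rw [hwd, dist_eq_norm]
end Norm2


theorem stmt7 {m d n s : ℕ}
    (A : Matrix (Fin m) (Fin d) ℝ) (D : Matrix (Fin d) (Fin n) ℝ)
    (hD : Function.Surjective D.mulVec) :
    DNSP A D s ↔ ∃ c : ℝ, 0 < c ∧ SNSPc A D s c := by
  classical
  constructor
  · intro hDNSP
    set W : Submodule ℝ (Fin n → ℝ) := LinearMap.ker (Matrix.mulVecLin D) with hW
    set N : Submodule ℝ (Fin n → ℝ) :=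
      LinearMap.ker ((Matrix.mulVecLin A).comp (Matrix.mulVecLin D)) with hN
    have hmemN : ∀ v : Fin n → ℝ, v ∈ N ↔ A.mulVec (D.mulVec v) = 0 := by
      intro v
      rw [hN, LinearMap.mem_ker, LinearMap.comp_apply, Matrix.mulVecLin_apply,
        Matrix.mulVecLin_apply]
    have hmemW : ∀ v : Fin n → ℝ, v ∈ W ↔ D.mulVec v = 0 := by
      intro v
      rw [hW, LinearMap.mem_ker, Matrix.mulVecLin_apply]
    have hTfin : ∀ T : Finset (Fin n), ∃ c, 0 < c ∧ (T.card ≤ s →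
        ∀ v ∈ N, c * Metric.infDist v (W : Set (Fin n → ℝ)) ≤ Gf T W v) := by
      intro T
      by_cases hT : T.card ≤ s
      · have hpos : ∀ v ∈ N, v ∉ W → 0 < Gf T W v := by
          intro v hvN hvW
          obtain ⟨u, hu, hlt⟩ := hDNSP T hT v ((hmemN v).1 hvN)
            (fun h => hvW ((hmemW v).2 h))
          have h2 : psi T W v ≤ norm1 (restr T v + u) := psi_le ((hmemW u).2 hu) v
          rw [Gf]
          linarith
        obtain ⟨c, hc, h⟩ := key T W (Module.finrank ℝ N) N le_rfl hpos
        exact ⟨c, hc, fun _ => h⟩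
      · exact ⟨1, one_pos, fun h => absurd h hT⟩
    choose cT hcTpos hcT using hTfin
    set C : ℝ := (∑ i, ∑ j, |D i j|) + 1 with hC
    have hS : (0:ℝ) ≤ ∑ i, ∑ j, |D i j| :=
      Finset.sum_nonneg fun i _ => Finset.sum_nonneg fun j _ => abs_nonneg _
    have hCpos : 0 < C := by rw [hC]; linarith
    have hne : (Finset.univ : Finset (Finset (Fin n))).Nonempty := ⟨∅, Finset.mem_univ ∅⟩
    set c₀ : ℝ := Finset.univ.inf' hne cT with hc₀
    have hc₀pos : 0 < c₀ := by
      rw [hc₀, Finset.lt_inf'_iff]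
      exact fun T _ => hcTpos T
    refine ⟨c₀ / C, div_pos hc₀pos hCpos, ?_⟩
    intro v hAv T hT
    have hvN : v ∈ N := (hmemN v).2 hAv
    obtain ⟨w, hwW, hweq, hwmin⟩ := psi_attained (T := T) (W := W) v
    refine ⟨w, (hmemW w).1 hwW, ?_⟩
    have h1 : c₀ * Metric.infDist v (W : Set (Fin n → ℝ)) ≤ Gf T W v := by
      calc c₀ * Metric.infDist v (W : Set (Fin n → ℝ))
          ≤ cT T * Metric.infDist v (W : Set (Fin n → ℝ)) := by
            apply mul_le_mul_of_nonneg_right _ Metric.infDist_nonneg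
            rw [hc₀]
            exact Finset.inf'_le _ (Finset.mem_univ T)
        _ ≤ Gf T W v := hcT T hT v hvN
    have h2 : norm2 (D.mulVec v) ≤ C * Metric.infDist v (W : Set (Fin n → ℝ)) := by
      rw [hC, hW]
      exact mulVec_le_infDist D v
    have h3 : (c₀ / C) * norm2 (D.mulVec v) ≤ c₀ * Metric.infDist v (W : Set (Fin n → ℝ)) := by
      rw [div_mul_eq_mul_div, div_le_iff₀ hCpos]
      have hn2 : 0 ≤ norm2 (D.mulVec v) := by
        have := Real.sqrt_nonneg (∑ i, ‖D.mulVec v i‖ ^ 2)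
        rw [norm2]
        exact this
      nlinarith
    rw [Gf, hweq] at h1
    linarith
  · rintro ⟨c, hc, hS⟩ T hT v hAv hDv
    obtain ⟨u, hu, hineq⟩ := hS v hAv T hT
    refine ⟨u, hu, ?_⟩
    have hpos := norm2_pos hDv
    nlinarith
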